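/- Let Φ, σ ∈ C([0,∞)) ∩ C¹_loc((0,∞)) with Φ(0) = σ(0) = 0 and Φ′(ξ) > 0 for every ξ ∈ (0,∞), and let γ ∈ (0,∞). For β ∈ (0,1) and M ∈ [2,∞), define Φ_{β,M}(ξ) = ∫_0^ξ Φ′ φ_β ζ_M and Σ_{β,M}(ξ) = ∫_0^ξ (σ′)² φ_β ζ_M. Then there exists c_{β,M} ∈ (0,∞), depending on β, M, γ, Φ, and σ, such that for every ξ ∈ [0,∞): |Φ_{β,M}(ξ) − Φ_{β,M}(γ)| + |Σ_{β,M}(ξ) − Σ_{β,M}(γ)| ≤ c_{β,M} ( |Φ^{1/2}(ξ) − Φ^{1/2}(γ)|^{1/2} + |ξ − γ| 𝟙_{|ξ−γ| ≥ γ/2} ). -/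

import Mathlib

open MeasureTheory

/-- The small-value cutoff `φ_β`: `0` on `[0,β/2]`, `1` on `[β,∞)`, linear in between. -/
noncomputable def phicut (β ξ : ℝ) : ℝ := min 1 (max 0 ((ξ - β/2) / (β/2)))

/-- The large-value cutoff `ζ_M`: `1` on `[0,M]`, `0` on `[M+1,∞)`, linear in between. -/
noncomputable def zetacut (M ξ : ℝ) : ℝ := min 1 (max 0 (M + 1 - ξ))

/-- `Φ_{β,M}(ξ) = ∫_0^ξ Φ′ φ_β ζ_M`. -/
noncomputable def PhiBM (Φ : ℝ → ℝ) (β M ξ : ℝ) : ℝ :=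
  ∫ s in (0:ℝ)..ξ, deriv Φ s * phicut β s * zetacut M s

/-- `Σ_{β,M}(ξ) = ∫_0^ξ (σ′)² φ_β ζ_M`. -/
noncomputable def SigmaBM (σ : ℝ → ℝ) (β M ξ : ℝ) : ℝ :=
  ∫ s in (0:ℝ)..ξ, (deriv σ s) ^ 2 * phicut β s * zetacut M s

lemma phicut_zero {β s : ℝ} (hβ : 0 < β) (hs : s ≤ β/2) : phicut β s = 0 := by
  have h : (s - β/2) / (β/2) ≤ 0 :=
    div_nonpos_of_nonpos_of_nonneg (by linarith) (by linarith)
  simp [phicut, max_eq_left h]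

lemma zetacut_zero {M s : ℝ} (hs : M + 1 ≤ s) : zetacut M s = 0 := by
  have h : M + 1 - s ≤ 0 := by linarith
  simp [zetacut, max_eq_left h]

lemma phicut_cont (β : ℝ) : Continuous (phicut β) := by unfold phicut; fun_prop

lemma zetacut_cont (M : ℝ) : Continuous (zetacut M) := by unfold zetacut; fun_prop

lemma cut_cont (F : ℝ → ℝ) (hF : ContinuousOn F (Set.Ioi 0)) {β : ℝ} (hβ : 0 < β) (M : ℝ) :
    Continuous (fun s => F s * phicut β s * zetacut M s) := by
  rw [continuous_iff_continuousAt]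
  intro x
  rcases lt_or_ge x (β/2) with hx | hx
  · have h : (fun _ : ℝ => (0:ℝ)) =ᶠ[nhds x] fun s => F s * phicut β s * zetacut M s := by
      filter_upwards [Iio_mem_nhds hx] with s hs
      simp [phicut_zero hβ (le_of_lt hs)]
    exact continuousAt_const.congr h
  · have hx0 : 0 < x := lt_of_lt_of_le (by linarith) hx
    exact ((hF.continuousAt (Ioi_mem_nhds hx0)).mul (phicut_cont β).continuousAt).mul
      (zetacut_cont M).continuousAt

lemma cut_bound (F : ℝ → ℝ) (hF : ContinuousOn F (Set.Ioi 0)) {β : ℝ} (hβ : 0 < β) (M : ℝ) :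
    ∃ K : ℝ, 0 ≤ K ∧ ∀ s : ℝ, |F s * phicut β s * zetacut M s| ≤ K := by
  have hc := cut_cont F hF hβ M
  obtain ⟨C, hC⟩ := (isCompact_Icc (a := β/2) (b := M+1)).exists_bound_of_continuousOn
    hc.continuousOn
  refine ⟨max C 0, le_max_right _ _, fun s => ?_⟩
  rcases le_or_gt s (β/2) with hs | hs
  · simp [phicut_zero hβ hs, le_max_right]
  rcases le_or_gt (M+1) s with hs' | hs'
  · simp [zetacut_zero hs', le_max_right]
  · exact le_trans (hC s ⟨le_of_lt hs, le_of_lt hs'⟩) (le_max_left _ _)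

lemma diff_bound (f : ℝ → ℝ) (hf : Continuous f) {K : ℝ} (hK : ∀ s, |f s| ≤ K) (γ ξ : ℝ) :
    |(∫ s in (0:ℝ)..ξ, f s) - (∫ s in (0:ℝ)..γ, f s)| ≤ K * |ξ - γ| := by
  rw [intervalIntegral.integral_interval_sub_left (hf.intervalIntegrable 0 ξ)
    (hf.intervalIntegrable 0 γ)]
  have := intervalIntegral.norm_integral_le_of_norm_le_const
    (C := K) (a := γ) (b := ξ) (f := f) (fun x _ => by rw [Real.norm_eq_abs]; exact hK x)
  rwa [Real.norm_eq_abs] at this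


set_option maxHeartbeats 1000000

/-- For every `β ∈ (0,1)` and `M ∈ [2,∞)` there exists `c_{β,M} > 0` such that
`|Φ_{β,M}(ξ) − Φ_{β,M}(γ)| + |Σ_{β,M}(ξ) − Σ_{β,M}(γ)|
  ≤ c_{β,M} (|Φ^{1/2}(ξ) − Φ^{1/2}(γ)|^{1/2} + |ξ − γ| 𝟙_{|ξ−γ|≥γ/2})`. -/
theorem stmt16 (Φ σ : ℝ → ℝ) (γ : ℝ) (hγ : 0 < γ)
    (hΦc : ContinuousOn Φ (Set.Ici 0)) (hΦ0 : Φ 0 = 0)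
    (hΦdiff : DifferentiableOn ℝ Φ (Set.Ioi 0))
    (hΦderiv : ContinuousOn (deriv Φ) (Set.Ioi 0))
    (hΦpos : ∀ ξ : ℝ, 0 < ξ → 0 < deriv Φ ξ)
    (hσc : ContinuousOn σ (Set.Ici 0)) (hσ0 : σ 0 = 0)
    (hσdiff : DifferentiableOn ℝ σ (Set.Ioi 0))
    (hσderiv : ContinuousOn (deriv σ) (Set.Ioi 0)) :
    ∀ β ∈ Set.Ioo (0:ℝ) 1, ∀ M : ℝ, 2 ≤ M →
      ∃ c : ℝ, 0 < c ∧ ∀ ξ : ℝ, 0 ≤ ξ →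
        |PhiBM Φ β M ξ - PhiBM Φ β M γ| + |SigmaBM σ β M ξ - SigmaBM σ β M γ|
          ≤ c * (|Real.sqrt (Φ ξ) - Real.sqrt (Φ γ)| ^ ((1:ℝ)/2)
            + (if γ/2 ≤ |ξ - γ| then |ξ - γ| else 0)) := by
  intro β hβ M hM
  have hβ0 : 0 < β := hβ.1
  -- Lipschitz bounds on the two primitives
  obtain ⟨K₁, hK₁0, hK₁⟩ := cut_bound (deriv Φ) hΦderiv hβ0 M
  obtain ⟨K₂, hK₂0, hK₂⟩ := cut_bound (fun s => (deriv σ s) ^ 2)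
    (hσderiv.pow 2) hβ0 M
  have hcont₁ := cut_cont (deriv Φ) hΦderiv hβ0 M
  have hcont₂ := cut_cont (fun s => (deriv σ s) ^ 2) (hσderiv.pow 2) hβ0 M
  have hLip : ∀ ξ : ℝ,
      |PhiBM Φ β M ξ - PhiBM Φ β M γ| + |SigmaBM σ β M ξ - SigmaBM σ β M γ|
        ≤ (K₁ + K₂) * |ξ - γ| := by
    intro ξ
    have h1 := diff_bound _ hcont₁ hK₁ γ ξ
    have h2 := diff_bound _ hcont₂ hK₂ γ ξ
    unfold PhiBM SigmaBM
    nlinarith [abs_nonneg (ξ - γ)]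
  set K := K₁ + K₂ with hK
  have hK0 : 0 ≤ K := by positivity
  -- monotonicity of Φ on [0,∞)
  have hΦmono : StrictMonoOn Φ (Set.Ici 0) := by
    apply strictMonoOn_of_deriv_pos (convex_Ici 0) hΦc
    intro x hx
    rw [interior_Ici] at hx
    exact hΦpos x hx
  have hΦnn : ∀ x : ℝ, 0 ≤ x → 0 ≤ Φ x := by
    intro x hx
    rcases eq_or_lt_of_le hx with h | h
    · rw [← h, hΦ0]
    · have := hΦmono (Set.self_mem_Ici) (Set.mem_Ici.2 hx) h
      rw [hΦ0] at this; exact le_of_lt this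
  -- minimum of deriv Φ on [γ/2, 3γ/2]
  obtain ⟨x₀, hx₀, hmin⟩ := (isCompact_Icc (a := γ/2) (b := 3*γ/2)).exists_isMinOn
    (Set.nonempty_Icc.2 (by linarith)) (hΦderiv.mono (fun y hy => by
      simp only [Set.mem_Ioi]; have := hy.1; linarith))
  set m := deriv Φ x₀ with hm
  have hm0 : 0 < m := hΦpos x₀ (by have := hx₀.1; linarith)
  -- Φ - m x is monotone on [γ/2, 3γ/2]
  have hmono2 : MonotoneOn (fun x => Φ x - m * x) (Set.Icc (γ/2) (3*γ/2)) := by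
    apply monotoneOn_of_deriv_nonneg (convex_Icc _ _)
    · exact ((hΦc.mono (fun y hy => by
        simp only [Set.mem_Ici]; have := hy.1; linarith)).sub
        (continuousOn_const.mul continuousOn_id))
    · intro x hx
      rw [interior_Icc] at hx
      have hx0 : (0:ℝ) < x := by have := hx.1; linarith
      exact ((hΦdiff.differentiableAt (Ioi_mem_nhds hx0)).sub
        ((differentiableAt_id.const_mul m))).differentiableWithinAt
    · intro x hx
      rw [interior_Icc] at hx
      have hx0 : (0:ℝ) < x := by have := hx.1; linarith
      have hd1 : DifferentiableAt ℝ Φ x := hΦdiff.differentiableAt (Ioi_mem_nhds hx0)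
      have hd2 : DifferentiableAt ℝ (fun x : ℝ => m * x) x := differentiableAt_id.const_mul m
      have : deriv (fun x => Φ x - m * x) x = deriv Φ x - m := by
        rw [deriv_fun_sub hd1 hd2, deriv_const_mul _ differentiableAt_id, deriv_id'']
        ring
      rw [this, sub_nonneg]
      exact hmin ⟨le_of_lt hx.1, le_of_lt hx.2⟩
  set A := Φ (3*γ/2) with hA
  have hA0 : 0 ≤ A := hΦnn _ (by linarith)
  -- the constant
  set c := (K + 1) * ((2 * Real.sqrt A / m) * (Real.sqrt A) ^ ((1:ℝ)/2) + 1) with hc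
  have hc0 : 0 < c := by
    apply mul_pos (by linarith)
    have h1 : 0 ≤ 2 * Real.sqrt A / m := div_nonneg (by positivity) hm0.le
    have h2 : (0:ℝ) ≤ (Real.sqrt A) ^ ((1:ℝ)/2) := Real.rpow_nonneg (Real.sqrt_nonneg A) _
    have h3 : 0 ≤ 2 * Real.sqrt A / m * (Real.sqrt A) ^ ((1:ℝ)/2) := mul_nonneg h1 h2
    linarith
  refine ⟨c, hc0, fun ξ hξ => ?_⟩
  have hrpow0 : (0:ℝ) ≤ |Real.sqrt (Φ ξ) - Real.sqrt (Φ γ)| ^ ((1:ℝ)/2) :=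
    Real.rpow_nonneg (abs_nonneg _) _
  by_cases hfar : γ/2 ≤ |ξ - γ|
  · rw [if_pos hfar]
    calc |PhiBM Φ β M ξ - PhiBM Φ β M γ| + |SigmaBM σ β M ξ - SigmaBM σ β M γ|
        ≤ K * |ξ - γ| := hLip ξ
      _ ≤ c * |ξ - γ| := by
          apply mul_le_mul_of_nonneg_right _ (abs_nonneg _)
          rw [hc]
          have h1 : 0 ≤ 2 * Real.sqrt A / m := div_nonneg (by positivity) hm0.le
          have h2 : (0:ℝ) ≤ (Real.sqrt A) ^ ((1:ℝ)/2) := Real.rpow_nonneg (Real.sqrt_nonneg A) _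
          have h3 : 0 ≤ 2 * Real.sqrt A / m * (Real.sqrt A) ^ ((1:ℝ)/2) := mul_nonneg h1 h2
          nlinarith
      _ ≤ c * (|Real.sqrt (Φ ξ) - Real.sqrt (Φ γ)| ^ ((1:ℝ)/2) + |ξ - γ|) := by
          nlinarith [abs_nonneg (ξ - γ)]
  · rw [if_neg hfar]
    push_neg at hfar
    have hξmem : ξ ∈ Set.Icc (γ/2) (3*γ/2) := by
      rw [abs_lt] at hfar
      constructor <;> linarith [hfar.1, hfar.2]
    have hγmem : γ ∈ Set.Icc (γ/2) (3*γ/2) := ⟨by linarith, by linarith⟩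
    have hΦξ0 : 0 ≤ Φ ξ := hΦnn ξ hξ
    have hΦγ0 : 0 ≤ Φ γ := hΦnn γ (le_of_lt hγ)
    -- m |ξ - γ| ≤ |Φ ξ - Φ γ|
    have hΔ : m * |ξ - γ| ≤ |Φ ξ - Φ γ| := by
      rcases le_total γ ξ with h | h
      · have h2 := hmono2 hγmem hξmem h
        simp only at h2
        rw [abs_of_nonneg (sub_nonneg.2 h), abs_of_nonneg (by nlinarith : (0:ℝ) ≤ Φ ξ - Φ γ)]
        nlinarith
      · have h2 := hmono2 hξmem hγmem h
        simp only at h2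
        rw [abs_of_nonpos (sub_nonpos.2 h), abs_of_nonpos (by nlinarith : Φ ξ - Φ γ ≤ 0)]
        nlinarith
    -- bounds by A
    have hξA : Φ ξ ≤ A := by
      rcases eq_or_lt_of_le hξmem.2 with h | h
      · rw [h]
      · exact le_of_lt (hΦmono (Set.mem_Ici.2 hξ) (Set.mem_Ici.2 (by linarith)) h)
    have hγA : Φ γ ≤ A := le_of_lt
      (hΦmono (Set.mem_Ici.2 (le_of_lt hγ)) (Set.mem_Ici.2 (by linarith)) (by linarith))
    have hsξ : Real.sqrt (Φ ξ) ≤ Real.sqrt A := Real.sqrt_le_sqrt hξA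
    have hsγ : Real.sqrt (Φ γ) ≤ Real.sqrt A := Real.sqrt_le_sqrt hγA
    set t := |Real.sqrt (Φ ξ) - Real.sqrt (Φ γ)| with ht
    have ht0 : 0 ≤ t := abs_nonneg _
    have htA : t ≤ Real.sqrt A := by
      rw [ht, abs_sub_le_iff]
      constructor <;> linarith [Real.sqrt_nonneg (Φ ξ), Real.sqrt_nonneg (Φ γ)]
    have hfac : |Φ ξ - Φ γ| ≤ t * (2 * Real.sqrt A) := by
      have key : Φ ξ - Φ γ =
          (Real.sqrt (Φ ξ) - Real.sqrt (Φ γ)) * (Real.sqrt (Φ ξ) + Real.sqrt (Φ γ)) := by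
        have h1 := Real.sq_sqrt hΦξ0
        have h2 := Real.sq_sqrt hΦγ0
        linear_combination h2 - h1
      rw [key, abs_mul, ← ht,
        abs_of_nonneg (by positivity : (0:ℝ) ≤ Real.sqrt (Φ ξ) + Real.sqrt (Φ γ))]
      have h4 : Real.sqrt (Φ ξ) + Real.sqrt (Φ γ) ≤ 2 * Real.sqrt A := by linarith
      exact mul_le_mul_of_nonneg_left h4 ht0
    -- |ξ - γ| ≤ (2√A/m) t
    have hstep : |ξ - γ| ≤ (2 * Real.sqrt A / m) * t := by
      rw [div_mul_eq_mul_div, le_div_iff₀ hm0]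
      calc |ξ - γ| * m = m * |ξ - γ| := mul_comm _ _
        _ ≤ |Φ ξ - Φ γ| := hΔ
        _ ≤ t * (2 * Real.sqrt A) := hfac
        _ = 2 * Real.sqrt A * t := mul_comm _ _
    -- t ≤ (√A)^{1/2} t^{1/2}
    have hts : t ≤ (Real.sqrt A) ^ ((1:ℝ)/2) * t ^ ((1:ℝ)/2) := by
      have h1 : t = t ^ ((1:ℝ)/2) * t ^ ((1:ℝ)/2) := by
        rw [← Real.rpow_add' ht0 (by norm_num)]
        norm_num
      have h2 : t ^ ((1:ℝ)/2) ≤ (Real.sqrt A) ^ ((1:ℝ)/2) :=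
        Real.rpow_le_rpow ht0 htA (by norm_num)
      have h3 : (0:ℝ) ≤ t ^ ((1:ℝ)/2) := Real.rpow_nonneg ht0 _
      calc t = t ^ ((1:ℝ)/2) * t ^ ((1:ℝ)/2) := h1
        _ ≤ (Real.sqrt A) ^ ((1:ℝ)/2) * t ^ ((1:ℝ)/2) := mul_le_mul_of_nonneg_right h2 h3
    have hfinal : |ξ - γ| ≤ ((2 * Real.sqrt A / m) * (Real.sqrt A) ^ ((1:ℝ)/2)) * t ^ ((1:ℝ)/2) := by
      calc |ξ - γ| ≤ (2 * Real.sqrt A / m) * t := hstep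
        _ ≤ (2 * Real.sqrt A / m) * ((Real.sqrt A) ^ ((1:ℝ)/2) * t ^ ((1:ℝ)/2)) := by
            apply mul_le_mul_of_nonneg_left hts (div_nonneg (by positivity) hm0.le)
        _ = ((2 * Real.sqrt A / m) * (Real.sqrt A) ^ ((1:ℝ)/2)) * t ^ ((1:ℝ)/2) := by ring
    calc |PhiBM Φ β M ξ - PhiBM Φ β M γ| + |SigmaBM σ β M ξ - SigmaBM σ β M γ|
        ≤ K * |ξ - γ| := hLip ξ
      _ ≤ K * (((2 * Real.sqrt A / m) * (Real.sqrt A) ^ ((1:ℝ)/2)) * t ^ ((1:ℝ)/2)) :=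
          mul_le_mul_of_nonneg_left hfinal hK0
      _ ≤ c * (t ^ ((1:ℝ)/2) + 0) := by
          rw [add_zero, hc]
          have h3 : (0:ℝ) ≤ t ^ ((1:ℝ)/2) := Real.rpow_nonneg ht0 _
          have h1 : 0 ≤ 2 * Real.sqrt A / m := div_nonneg (by positivity) hm0.le
          have h2 : (0:ℝ) ≤ (Real.sqrt A) ^ ((1:ℝ)/2) := Real.rpow_nonneg (Real.sqrt_nonneg A) _
          nlinarith
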